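/- Let A ⊆ ℕ be an infinite set that contains an infinite decidable (recursive) subset B, viewed as a sequence X_A ∈ {0,1}^ω via its characteristic function. Fix n ≥ 1. Then the {0,n}-valued martingale that bets n dollars on outcome 1 at positions in B and bets 0 elsewhere (starting with capital n) succeeds on X_A, i.e., limsup_k M(X_A↾k) = ∞. Consequently every {0,n}-valued random real is bi-immune. -/
import Mathlib


open Filter

/-- The initial segment of length `n` of an infinite binary sequence. -/
def seg (X : ℕ → Bool) (n : ℕ) : List Bool := List.ofFn (fun i : Fin n => X i)

/-- The martingale fairness condition. -/
def fairM (M : List Bool → ℝ) : Prop :=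
  ∀ σ : List Bool, M σ = (M (σ ++ [false]) + M (σ ++ [true])) / 2

lemma seg_succ (X : ℕ → Bool) (k : ℕ) : seg X (k + 1) = seg X k ++ [X k] := by
  rw [seg, List.ofFn_succ']
  simp [seg, List.concat_eq_append]

lemma seg_length (X : ℕ → Bool) (k : ℕ) : (seg X k).length = k := by
  simp [seg]

/-- If the characteristic sequence `X` of a set `A` is `true` on an infinite
set `B`, then the `{0,n}`-valued martingale betting `n` dollars on outcome `1`
at positions in `B` (and abstaining elsewhere), with initial capital `n`,
succeeds on `X`.  (Hence every `{0,n}`-valued random real is bi-immune.) -/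
theorem stmt9 (B : Set ℕ) (hB : B.Infinite) (X : ℕ → Bool)
    (hBX : ∀ i ∈ B, X i = true) (n : ℕ) (hn : 1 ≤ n)
    (M : List Bool → ℝ)
    (hfair : fairM M) (hnonneg : ∀ σ, 0 ≤ M σ)
    (hinit : M [] = n)
    (hbet : ∀ σ : List Bool, σ.length ∈ B → (n : ℝ) ≤ M σ →
      M (σ ++ [true]) = M σ + n)
    (habstain : ∀ σ : List Bool, σ.length ∉ B → ∀ b : Bool, M (σ ++ [b]) = M σ) :
    ∀ C : ℝ, ∃ k : ℕ, C < M (seg X k) := by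
  have hn1 : (1 : ℝ) ≤ (n : ℝ) := by exact_mod_cast hn
  have hnpos : (0 : ℝ) < (n : ℝ) := lt_of_lt_of_le one_pos hn1
  have hseg0 : seg X 0 = [] := by simp [seg]
  -- capital is always at least n
  have hge : ∀ k, (n : ℝ) ≤ M (seg X k) := by
    intro k
    induction k with
    | zero => rw [hseg0, hinit]
    | succ k ih =>
      rw [seg_succ]
      by_cases hk : k ∈ B
      · rw [hBX k hk, hbet _ (by rw [seg_length]; exact hk) ih]
        linarith
      · rw [habstain _ (by rw [seg_length]; exact hk)]
        exact ih
  have hmono : Monotone fun k => M (seg X k) := by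
    apply monotone_nat_of_le_succ
    intro k
    show M (seg X k) ≤ M (seg X (k + 1))
    rw [seg_succ]
    by_cases hk : k ∈ B
    · rw [hBX k hk, hbet _ (by rw [seg_length]; exact hk) (hge k)]
      linarith
    · rw [habstain _ (by rw [seg_length]; exact hk)]
  -- capital exceeds n*(j+1) for every j
  have hstep : ∀ j : ℕ, ∃ k, (n : ℝ) * (j + 1) ≤ M (seg X k) := by
    intro j
    induction j with
    | zero => exact ⟨0, by simpa using hge 0⟩
    | succ j ih =>
      obtain ⟨k, hk⟩ := ih
      obtain ⟨b, hbB, hkb⟩ := hB.exists_gt k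
      refine ⟨b + 1, ?_⟩
      rw [seg_succ, hBX b hbB, hbet _ (by rw [seg_length]; exact hbB) (hge b)]
      have : M (seg X k) ≤ M (seg X b) := hmono hkb.le
      push_cast
      linarith
  intro C
  obtain ⟨j, hj⟩ := exists_nat_ge C
  obtain ⟨k, hk⟩ := hstep j
  refine ⟨k, lt_of_lt_of_le ?_ hk⟩
  have : (j : ℝ) + 1 ≤ (n : ℝ) * (j + 1) := by
    nlinarith [Nat.cast_nonneg (α := ℝ) j]
  linarith
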